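/- (Eckart–Young for Frobenius norm, rank at most 1 case on finite matrices) For any real m×n matrix X with singular values σ₁ ≥ σ₂ ≥ ..., and any matrix Y of rank ≤ k, the Frobenius norm satisfies ‖X − Y‖_F² ≥ σ_{k+1}² + ... + σ_{min(m,n)}², i.e., truncating the SVD at rank k is the best rank-k approximation in Frobenius norm. -/

import Mathlib

open Finset Matrix

lemma trace_diagonal_mul {p : ℕ} (g : Fin p → ℝ) (C : Matrix (Fin p) (Fin p) ℝ) :
    (Matrix.diagonal g * C).trace = ∑ j, g j * C j j := by
  simp [Matrix.trace, Matrix.diag, Matrix.mul_apply, Matrix.diagonal_apply, ite_mul, zero_mul,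
    Finset.sum_ite_eq, Finset.mem_univ]

lemma psd_diag {p : ℕ} {A : Matrix (Fin p) (Fin p) ℝ} (hA : A.PosSemidef) (i : Fin p) : 0 ≤ A i i := by
  exact hA.diag_nonneg

lemma psd_trace_nonneg {p : ℕ} {A : Matrix (Fin p) (Fin p) ℝ} (hA : A.PosSemidef) :
    0 ≤ A.trace := Finset.sum_nonneg fun i _ => psd_diag hA i

lemma trace_mul_psd_nonneg {p : ℕ} {A B : Matrix (Fin p) (Fin p) ℝ}
    (hA : A.PosSemidef) (hB : B.PosSemidef) : 0 ≤ (A * B).trace := by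
  obtain ⟨S, hSh, hS⟩ : ∃ S : Matrix (Fin p) (Fin p) ℝ, S.IsHermitian ∧ S * S = A :=
    open scoped MatrixOrder in
    ⟨CFC.sqrt A, (CFC.sqrt_nonneg A).posSemidef.1, CFC.sqrt_mul_sqrt_self A hA.nonneg⟩
  have h2 : (A * B).trace = (S * B * S).trace := by
    rw [← hS, Matrix.mul_assoc, Matrix.trace_mul_comm, Matrix.mul_assoc]
  rw [h2]
  refine psd_trace_nonneg ?_
  have := hB.mul_mul_conjTranspose_same S
  rwa [hSh.eq] at this


lemma aux_sum {n : ℕ} (k : ℕ) (hk : k < n) (f c : Fin n → ℝ)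
    (hf0 : ∀ i, 0 ≤ f i) (hfa : Antitone f)
    (hc0 : ∀ i, 0 ≤ c i) (hc1 : ∀ i, c i ≤ 1)
    (hcs : ((n - k : ℕ) : ℝ) ≤ ∑ i, c i) :
    ∑ i ∈ Finset.univ.filter (fun i : Fin n => k ≤ (i : ℕ)), f i ≤ ∑ i, f i * c i := by
  classical
  set S : Finset (Fin n) := Finset.univ.filter (fun i : Fin n => k ≤ (i : ℕ)) with hS
  set t : ℝ := f ⟨k, hk⟩ with ht
  have ht0 : 0 ≤ t := hf0 _
  have hcard : (S.card : ℝ) = ((n - k : ℕ) : ℝ) := by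
    congr 1
    have himg : S.map Fin.valEmbedding = Finset.Ico k n := by
      ext a
      simp only [Finset.mem_map, Finset.mem_Ico, hS, Finset.mem_filter, Finset.mem_univ,
        true_and, Fin.valEmbedding_apply]
      constructor
      · rintro ⟨i, hi, rfl⟩; exact ⟨hi, i.isLt⟩
      · rintro ⟨h1, h2⟩; exact ⟨⟨a, h2⟩, h1, rfl⟩
    rw [← Finset.card_map Fin.valEmbedding, himg, Nat.card_Ico]
  have hsplit : ∑ i, f i * c i = ∑ i ∈ S, f i * c i + ∑ i ∈ Sᶜ, f i * c i :=
    (Finset.sum_add_sum_compl S _).symm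
  have e1 : ∑ i ∈ S, f i = ∑ i ∈ S, f i * c i + ∑ i ∈ S, f i * (1 - c i) := by
    rw [← Finset.sum_add_distrib]
    exact Finset.sum_congr rfl fun i _ => by ring
  have e2 : ∑ i ∈ S, f i * (1 - c i) ≤ ∑ i ∈ S, t * (1 - c i) := by
    refine Finset.sum_le_sum fun i hi => ?_
    have hik : k ≤ (i : ℕ) := by simpa [hS] using hi
    exact mul_le_mul_of_nonneg_right (hfa (by simpa [Fin.le_def] using hik))
      (by linarith [hc1 i])
  have e3 : ∑ i ∈ S, t * (1 - c i) = t * (S.card : ℝ) - ∑ i ∈ S, t * c i := by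
    simp [mul_sub, Finset.sum_sub_distrib, mul_comm]
  have e4 : ∑ i ∈ S, t * c i + ∑ i ∈ Sᶜ, t * c i = t * ∑ i, c i := by
    rw [Finset.sum_add_sum_compl, Finset.mul_sum]
  have e5 : t * ((n - k : ℕ) : ℝ) ≤ t * ∑ i, c i := mul_le_mul_of_nonneg_left hcs ht0
  have e6 : ∑ i ∈ Sᶜ, t * c i ≤ ∑ i ∈ Sᶜ, f i * c i := by
    refine Finset.sum_le_sum fun i hi => ?_
    have hik : (i : ℕ) < k := by
      have : ¬ k ≤ (i : ℕ) := by simpa [hS] using hi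
      omega
    exact mul_le_mul_of_nonneg_right (hfa (show i ≤ ⟨k, hk⟩ by simp [Fin.le_def]; omega)) (hc0 i)
  have e7 : t * (S.card : ℝ) ≤ t * ∑ i, c i := by rw [hcard]; exact e5
  linarith


lemma exists_V {m n : ℕ} (Y : Matrix (Fin m) (Fin n) ℝ) :
    ∃ (d : ℕ) (V : Matrix (Fin n) (Fin d) ℝ),
      Vᴴ * V = 1 ∧ Y * V = 0 ∧ Y.rank + d = n := by
  classical
  set K : Submodule ℝ (Fin n → ℝ) := LinearMap.ker Y.mulVecLin with hK
  set K' : Submodule ℝ (EuclideanSpace ℝ (Fin n)) :=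
    K.map ((WithLp.linearEquiv 2 ℝ (Fin n → ℝ)).symm : (Fin n → ℝ) →ₗ[ℝ] EuclideanSpace ℝ (Fin n)) with hK'
  set d : ℕ := Module.finrank ℝ K' with hd
  have hfr : Module.finrank ℝ K' = Module.finrank ℝ K :=
    LinearEquiv.finrank_map_eq _ _
  have hrank : Y.rank + d = n := by
    rw [hd, hfr]
    have := LinearMap.finrank_range_add_finrank_ker Y.mulVecLin
    simpa [Matrix.rank] using this
  let b := stdOrthonormalBasis ℝ K'
  refine ⟨d, Matrix.of fun i j => ((b j : EuclideanSpace ℝ (Fin n)) : Fin n → ℝ) i, ?_, ?_, hrank⟩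
  · ext a b'
    have hob := b.orthonormal
    rw [orthonormal_iff_ite] at hob
    have h := hob a b'
    rw [Submodule.coe_inner, PiLp.inner_apply] at h
    simp only [RCLike.inner_apply, conj_trivial] at h
    simp only [Matrix.mul_apply, Matrix.conjTranspose_apply, Matrix.of_apply, star_trivial,
      Matrix.one_apply]
    rw [← h]; exact Finset.sum_congr rfl fun _ _ => mul_comm _ _
  · ext i j
    have hmem : (b j : EuclideanSpace ℝ (Fin n)) ∈ K' := (b j).2
    have hmem' : (b j : EuclideanSpace ℝ (Fin n)) ∈
        K.map ((WithLp.linearEquiv 2 ℝ (Fin n → ℝ)).symm : (Fin n → ℝ) →ₗ[ℝ] EuclideanSpace ℝ (Fin n)) := hmem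
    obtain ⟨x, hx, hxe⟩ := Submodule.mem_map.mp hmem' 
    have h0 : Y.mulVecLin x = 0 := hx
    have hxv : ∀ l, x l = ((b j : EuclideanSpace ℝ (Fin n)) : Fin n → ℝ) l := by
      rw [← hxe]; intro l; rfl
    have : (Y * Matrix.of fun i j => ((b j : EuclideanSpace ℝ (Fin n)) : Fin n → ℝ) i) i j
        = (Y.mulVecLin x) i := by
      simp only [Matrix.mul_apply, Matrix.mulVecLin_apply, Matrix.mulVec, dotProduct,
        Matrix.of_apply]
      exact Finset.sum_congr rfl fun l _ => by rw [hxv l]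
    rw [this, h0]
    rfl

/-- Eckart–Young theorem (Frobenius norm). -/
theorem eckart_young_frobenius {m n : ℕ} (X Y : Matrix (Fin m) (Fin n) ℝ)
    (k : ℕ) (hY : Y.rank ≤ k)
    (σ : Fin n → ℝ) (hσ0 : ∀ i, 0 ≤ σ i) (hσanti : Antitone σ)
    (hσ : ∃ e : Fin n ≃ Fin n, ∀ i,
      σ i ^ 2 = (Matrix.posSemidef_conjTranspose_mul_self X).1.eigenvalues (e i)) :
    ∑ i ∈ Finset.univ.filter (fun i : Fin n => k ≤ (i : ℕ)), σ i ^ 2 ≤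
      ∑ i, ∑ j, (X - Y) i j ^ 2 := by
  classical
  rcases le_or_gt n k with hnk | hk
  · have hempty : Finset.univ.filter (fun i : Fin n => k ≤ (i : ℕ)) = ∅ := by
      ext i
      simp only [Finset.mem_filter, Finset.mem_univ, true_and, Finset.notMem_empty, iff_false]
      have := i.isLt; omega
    rw [hempty, Finset.sum_empty]
    positivity
  obtain ⟨e, he⟩ := hσ
  obtain ⟨d, V, hVV, hYV, hrd⟩ := exists_V Y
  have hdk : ((n - k : ℕ) : ℝ) ≤ (d : ℝ) := by
    have : n - k ≤ d := by omega
    exact_mod_cast this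
  have hH : (Xᴴ * X).IsHermitian := (Matrix.posSemidef_conjTranspose_mul_self X).1
  set U : Matrix (Fin n) (Fin n) ℝ := (Matrix.IsHermitian.eigenvectorUnitary hH : Matrix (Fin n) (Fin n) ℝ) with hUdef
  have hU1 : Uᴴ * U = 1 := by
    rw [← Matrix.star_eq_conjTranspose]
    exact (Matrix.mem_unitaryGroup_iff').mp (Matrix.IsHermitian.eigenvectorUnitary hH).2
  have hU2 : U * Uᴴ = 1 := by
    rw [← Matrix.star_eq_conjTranspose]
    exact (Matrix.mem_unitaryGroup_iff).mp (Matrix.IsHermitian.eigenvectorUnitary hH).2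
  have hdiag : Matrix.diagonal (RCLike.ofReal ∘ hH.eigenvalues) = Matrix.diagonal hH.eigenvalues := by
    congr 1
  have hspec : Xᴴ * X = U * Matrix.diagonal hH.eigenvalues * Uᴴ := by
    have h := hH.spectral_theorem
    rw [Unitary.conjStarAlgAut_apply, Matrix.star_eq_conjTranspose, hdiag] at h
    exact h
  -- abbreviations
  set P : Matrix (Fin n) (Fin n) ℝ := V * Vᴴ with hPdef
  set C : Matrix (Fin n) (Fin n) ℝ := Uᴴ * P * U with hCdef
  have hProj : P * P = P := by
    rw [hPdef, Matrix.mul_assoc, ← Matrix.mul_assoc Vᴴ V Vᴴ, hVV, Matrix.one_mul]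
  have hPh : Pᴴ = P := by
    rw [hPdef, Matrix.conjTranspose_mul, Matrix.conjTranspose_conjTranspose]
  have h1P : (1 - P).PosSemidef := by
    have key : (1 - P) = (1 - P) * (1 - P)ᴴ := by
      rw [Matrix.conjTranspose_sub, Matrix.conjTranspose_one, hPh]
      have expand : (1 - P) * (1 - P) = 1 - P - P + P * P := by noncomm_ring
      rw [expand, hProj]
      abel
    rw [key]
    exact Matrix.posSemidef_self_mul_conjTranspose _
  have hB : ((X - Y)ᴴ * (X - Y)).PosSemidef := Matrix.posSemidef_conjTranspose_mul_self _
  have hRHS : ∑ i, ∑ j, (X - Y) i j ^ 2 = ((X - Y)ᴴ * (X - Y)).trace := by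
    rw [Matrix.trace, Finset.sum_comm]
    refine Finset.sum_congr rfl fun i _ => ?_
    simp [Matrix.diag, Matrix.mul_apply, pow_two]
  have htr1 : ((X - Y)ᴴ * (X - Y) * P).trace ≤ ((X - Y)ᴴ * (X - Y)).trace := by
    have h := trace_mul_psd_nonneg hB h1P
    have h2 : (X - Y)ᴴ * (X - Y) * (1 - P) = (X - Y)ᴴ * (X - Y) - (X - Y)ᴴ * (X - Y) * P := by
      rw [Matrix.mul_sub, Matrix.mul_one]
    rw [h2, Matrix.trace_sub] at h
    linarith
  have hMV : (X - Y) * V = X * V := by rw [Matrix.sub_mul, hYV, sub_zero]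
  have htr2 : ((X - Y)ᴴ * (X - Y) * P).trace = (Xᴴ * X * P).trace := by
    have key : ∀ M : Matrix (Fin m) (Fin n) ℝ,
        (Mᴴ * M * P).trace = ((M * V)ᴴ * (M * V)).trace := by
      intro M
      rw [hPdef, ← Matrix.mul_assoc, Matrix.trace_mul_comm]
      congr 1
      simp [Matrix.conjTranspose_mul, Matrix.mul_assoc]
    rw [key (X - Y), key X, hMV]
  have htr3 : (Xᴴ * X * P).trace = ∑ j, hH.eigenvalues j * C j j := by
    conv_lhs => rw [hspec]
    rw [Matrix.mul_assoc (U * Matrix.diagonal hH.eigenvalues) Uᴴ P, Matrix.trace_mul_comm,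
      ← Matrix.mul_assoc (Uᴴ * P) U (Matrix.diagonal hH.eigenvalues), Matrix.trace_mul_comm]
    exact trace_diagonal_mul _ _
  have hc0 : ∀ j, 0 ≤ C j j := by
    intro j
    have hCe : C = (Vᴴ * U)ᴴ * (Vᴴ * U) := by
      rw [hCdef, hPdef, Matrix.conjTranspose_mul, Matrix.conjTranspose_conjTranspose,
        Matrix.mul_assoc, Matrix.mul_assoc, ← Matrix.mul_assoc Uᴴ V (Vᴴ * U)]
    rw [hCe]
    exact psd_diag (Matrix.posSemidef_conjTranspose_mul_self _) j
  have hc1 : ∀ j, C j j ≤ 1 := by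
    intro j
    have hpsd := h1P.conjTranspose_mul_mul_same U
    have heq : Uᴴ * (1 - P) * U = 1 - C := by
      rw [Matrix.mul_sub, Matrix.mul_one, Matrix.sub_mul, hU1, hCdef]
    rw [heq] at hpsd
    have := psd_diag hpsd j
    simp only [Matrix.sub_apply, Matrix.one_apply_eq] at this
    linarith
  have hcsum : ∑ j, C j j = (d : ℝ) := by
    have : ∑ j, C j j = C.trace := rfl
    rw [this, hCdef, Matrix.mul_assoc, Matrix.trace_mul_comm, Matrix.mul_assoc, hU2,
      Matrix.mul_one, hPdef, Matrix.trace_mul_comm, hVV, Matrix.trace_one]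
    simp
  have hanti2 : Antitone (fun i => σ i ^ 2) :=
    fun i j hij => pow_le_pow_left₀ (hσ0 j) (hσanti hij) 2
  calc ∑ i ∈ Finset.univ.filter (fun i : Fin n => k ≤ (i : ℕ)), σ i ^ 2
      ≤ ∑ i, σ i ^ 2 * C (e i) (e i) := by
        refine aux_sum k hk _ (fun i => C (e i) (e i)) (fun i => sq_nonneg _) hanti2
          (fun i => hc0 _) (fun i => hc1 _) ?_
        rw [Equiv.sum_comp e (fun j => C j j), hcsum]
        exact hdk
    _ = ∑ j, hH.eigenvalues j * C j j := by
        rw [← Equiv.sum_comp e (fun j => hH.eigenvalues j * C j j)]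
        exact Finset.sum_congr rfl fun i _ => by rw [he i]
    _ = (Xᴴ * X * P).trace := htr3.symm
    _ = ((X - Y)ᴴ * (X - Y) * P).trace := htr2.symm
    _ ≤ ((X - Y)ᴴ * (X - Y)).trace := htr1
    _ = ∑ i, ∑ j, (X - Y) i j ^ 2 := hRHS.symm
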